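/- Let K ⊆ 𝒫(T). (a) If K is a coherent SDS or a finitely coherent SDS, then sds(sdt(K)) ⊆ K. (b) If K is a coherent SDS, then sdt(K) is a coherent SDT. (c) If K is a finitely coherent SDS and cl is finitary, then sdt(K) is a coherent SDT. -/
import Mathlib


universe u

variable {T : Type u}

/-- `cl` is a closure operator on subsets of `T`. -/
def IsClosure (cl : Set T → Set T) : Prop :=
  (∀ A : Set T, A ⊆ cl A) ∧
  (∀ A B : Set T, A ⊆ B → cl A ⊆ cl B) ∧
  (∀ A : Set T, cl (cl A) = cl A)

/-- `cl` is finitary: the closure of a set is the union of the closures of its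
finite subsets. -/
def IsFinitary (cl : Set T → Set T) : Prop :=
  ∀ A : Set T, cl A = ⋃ F ∈ {F : Set T | F.Finite ∧ F ⊆ A}, cl F

/-- A coherent set of desirable things (SDT): closed and avoiding the forbidden
things `Tneg`. -/
def CohSDT (cl : Set T → Set T) (Tneg : Set T) (D : Set T) : Prop :=
  cl D = D ∧ D ∩ Tneg = ∅

/-- Selection maps of a collection `W` of sets of things: maps choosing an
element of each member of `W`. -/
def Sel (W : Set (Set T)) : Type u :=
  {σ : Set T → T // ∀ A ∈ W, σ A ∈ A}

/-- A coherent set of desirable sets of things (SDS): axioms K1–K5. -/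
def CohSDS (cl : Set T → Set T) (Tneg : Set T) (K : Set (Set T)) : Prop :=
  (∅ : Set T) ∉ K ∧
  (∀ A₁ ∈ K, ∀ A₂ : Set T, A₁ ⊆ A₂ → A₂ ∈ K) ∧
  (∀ A ∈ K, A \ Tneg ∈ K) ∧
  (∀ t ∈ cl (∅ : Set T), ({t} : Set T) ∈ K) ∧
  (∀ W ⊆ K, W.Nonempty →
    ∀ f : Sel W → T, (∀ σ : Sel W, f σ ∈ cl (σ.1 '' W)) → Set.range f ∈ K)

/-- A finitely coherent SDS: axioms K1–K4 together with K5 restricted to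
nonempty finite subcollections. -/
def FinCohSDS (cl : Set T → Set T) (Tneg : Set T) (K : Set (Set T)) : Prop :=
  (∅ : Set T) ∉ K ∧
  (∀ A₁ ∈ K, ∀ A₂ : Set T, A₁ ⊆ A₂ → A₂ ∈ K) ∧
  (∀ A ∈ K, A \ Tneg ∈ K) ∧
  (∀ t ∈ cl (∅ : Set T), ({t} : Set T) ∈ K) ∧
  (∀ W ⊆ K, W.Finite → W.Nonempty →
    ∀ f : Sel W → T, (∀ σ : Sel W, f σ ∈ cl (σ.1 '' W)) → Set.range f ∈ K)

/-- A finitely coherent set of desirable finite sets of things (SDFS):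
axioms F1–F5. -/
def FinCohSDFS (cl : Set T → Set T) (Tneg : Set T) (K : Set (Set T)) : Prop :=
  (∀ F ∈ K, F.Finite) ∧
  (∅ : Set T) ∉ K ∧
  (∀ F₁ ∈ K, ∀ F₂ : Set T, F₂.Finite → F₁ ⊆ F₂ → F₂ ∈ K) ∧
  (∀ F ∈ K, F \ Tneg ∈ K) ∧
  (∀ t ∈ cl (∅ : Set T), ({t} : Set T) ∈ K) ∧
  (∀ W ⊆ K, W.Finite → W.Nonempty →
    ∀ f : Sel W → T, (∀ σ : Sel W, f σ ∈ cl (σ.1 '' W)) → Set.range f ∈ K)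

/-- The set of things whose singletons belong to `K`. -/
def sdt (K : Set (Set T)) : Set T := {t | ({t} : Set T) ∈ K}

/-- The SDS of all sets of things meeting `D`. -/
def sds (D : Set T) : Set (Set T) := {A | (A ∩ D).Nonempty}

/-- The SDFS of all finite sets of things meeting `D`. -/
def sdfs (D : Set T) : Set (Set T) := {F | F.Finite ∧ (F ∩ D).Nonempty}

/-- The event `𝒟_A` of all coherent SDTs meeting `A`. -/
def evA (cl : Set T → Set T) (Tneg : Set T) (A : Set T) : Set (Set T) :=
  {D | CohSDT cl Tneg D ∧ (A ∩ D).Nonempty}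

/-- The event `E(W)` of all coherent SDTs meeting every member of `W`
(with `E(∅)` equal to the set of all coherent SDTs). -/
def ev (cl : Set T → Set T) (Tneg : Set T) (W : Set (Set T)) : Set (Set T) :=
  {D | CohSDT cl Tneg D ∧ ∀ A ∈ W, (A ∩ D).Nonempty}

/-- An SDS is conjunctive if every desirable set contains a desirable
singleton. -/
def Conjunctive (K : Set (Set T)) : Prop :=
  ∀ A ∈ K, ∃ t ∈ A, ({t} : Set T) ∈ K

/-- Completeness of an SDS. -/
def CompleteSDS (K : Set (Set T)) : Prop :=
  ∀ A₁ A₂ : Set T, A₁ ∪ A₂ ∈ K → A₁ ∈ K ∨ A₂ ∈ K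

/-- The finitary part `K^f` of an SDS. -/
def finPart (K : Set (Set T)) : Set (Set T) :=
  {A | ∃ B ∈ K, B.Finite ∧ B ⊆ A}

/-- An SDS is finitary if every desirable set has a finite desirable subset. -/
def FinitarySDS (K : Set (Set T)) : Prop :=
  ∀ A ∈ K, ∃ B, B.Finite ∧ B ⊆ A ∧ B ∈ K

/-- The lattice of events `E`. -/
def Ecal (cl : Set T → Set T) (Tneg : Set T) : Set (Set (Set T)) :=
  {E | ∃ W : Set (Set T), E = ev cl Tneg W}

/-- The lattice of finitary events `E_fin`. -/
def Efin (cl : Set T → Set T) (Tneg : Set T) : Set (Set (Set T)) :=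
  {E | ∃ W : Set (Set T), W.Finite ∧ E = ev cl Tneg W}

/-- A filter on a lattice of events `L` ordered by inclusion. -/
def IsFilterOn (L F : Set (Set (Set T))) : Prop :=
  F ⊆ L ∧ F.Nonempty ∧
  (∀ E₁ ∈ F, ∀ E₂ ∈ L, E₁ ⊆ E₂ → E₂ ∈ F) ∧
  (∀ E₁ ∈ F, ∀ E₂ ∈ F, E₁ ∩ E₂ ∈ F)

/-- A proper filter on `L`. -/
def IsProperFilterOn (L F : Set (Set (Set T))) : Prop :=
  IsFilterOn L F ∧ F ≠ L

/-- A prime filter on `L`. -/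
def IsPrimeFilterOn (L F : Set (Set (Set T))) : Prop :=
  IsProperFilterOn L F ∧
  ∀ E₁ ∈ L, ∀ E₂ ∈ L, E₁ ∪ E₂ ∈ F → E₁ ∈ F ∨ E₂ ∈ F

/-- A proper principal filter on `L`: the upset of some nonempty `E₀ ∈ L`. -/
def IsProperPrincipalFilterOn (L F : Set (Set (Set T))) : Prop :=
  ∃ E₀ ∈ L, E₀ ≠ (∅ : Set (Set T)) ∧ F = {E' | E' ∈ L ∧ E₀ ⊆ E'}

/-- The map `f̂` sending an SDS to the collection of events of its finite
subcollections. -/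
def fhat (cl : Set T → Set T) (Tneg : Set T) (K : Set (Set T)) :
    Set (Set (Set T)) :=
  {E | ∃ W : Set (Set T), W ⊆ K ∧ W.Finite ∧ E = ev cl Tneg W}

/-- The map `f` sending an SDS to the collection of events of all of its
subcollections. -/
def fprin (cl : Set T → Set T) (Tneg : Set T) (K : Set (Set T)) :
    Set (Set (Set T)) :=
  {E | ∃ W : Set (Set T), W ⊆ K ∧ E = ev cl Tneg W}

/-- The map `d` sending a collection of events to the SDS it determines. -/
def dmap (cl : Set T → Set T) (Tneg : Set T) (F : Set (Set (Set T))) :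
    Set (Set T) :=
  {A : Set T | evA cl Tneg A ∈ F}

/-- `K` is finitely consistent: it is included in some finitely coherent SDS. -/
def FinConsistent (cl : Set T → Set T) (Tneg : Set T) (K : Set (Set T)) : Prop :=
  ∃ K' : Set (Set T), FinCohSDS cl Tneg K' ∧ K ⊆ K'

/-- `K` is consistent: it is included in some coherent SDS. -/
def Consistent (cl : Set T → Set T) (Tneg : Set T) (K : Set (Set T)) : Prop :=
  ∃ K' : Set (Set T), CohSDS cl Tneg K' ∧ K ⊆ K'

/-- The finitary closure operator on SDSes (with value `𝒫(T)` when `K` is not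
finitely consistent, via the empty-intersection convention). -/
def clFin (cl : Set T → Set T) (Tneg : Set T) (K : Set (Set T)) : Set (Set T) :=
  ⋂₀ {K' : Set (Set T) | FinCohSDS cl Tneg K' ∧ K ⊆ K'}

/-- The closure operator on SDSes (with value `𝒫(T)` when `K` is not
consistent, via the empty-intersection convention). -/
def clSDS (cl : Set T → Set T) (Tneg : Set T) (K : Set (Set T)) : Set (Set T) :=
  ⋂₀ {K' : Set (Set T) | CohSDS cl Tneg K' ∧ K ⊆ K'}

lemma sdt_aux {T : Type u} [Nonempty T] (cl : Set T → Set T) (K : Set (Set T))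
    (F : Set T) (hF : F ⊆ sdt K) (hFne : F.Nonempty) (t : T) (ht : t ∈ cl F)
    (hK5 : (Set.singleton '' F) ⊆ K → (Set.singleton '' F).Nonempty →
      ∀ f : Sel (Set.singleton '' F) → T,
        (∀ σ : Sel (Set.singleton '' F), f σ ∈ cl (σ.1 '' (Set.singleton '' F))) →
        Set.range f ∈ K) :
    ({t} : Set T) ∈ K := by
  set W : Set (Set T) := Set.singleton '' F with hW
  have hWK : W ⊆ K := by
    rintro A ⟨d, hd, rfl⟩
    exact hF hd
  have hWne : W.Nonempty := hFne.image _
  -- every selection map of W has image exactly F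
  have himg : ∀ σ : Sel W, σ.1 '' W = F := by
    intro σ
    ext x
    constructor
    · rintro ⟨A, ⟨d, hd, rfl⟩, rfl⟩
      have h := σ.2 _ ⟨d, hd, rfl⟩
      have h2 : σ.1 (Set.singleton d) = d := h
      rw [h2]; exact hd
    · intro hx
      exact ⟨Set.singleton x, ⟨x, hx, rfl⟩, σ.2 _ ⟨x, hx, rfl⟩⟩
  have σ₀ : Sel W := by
    classical
    refine ⟨fun A => if h : A.Nonempty then h.choose else Classical.arbitrary T, ?_⟩
    rintro A ⟨d, hd, rfl⟩
    have h : (Set.singleton d).Nonempty := ⟨d, rfl⟩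
    simp only [dif_pos h]
    exact h.choose_spec
  haveI : Nonempty (Sel W) := ⟨σ₀⟩
  have h := hK5 hWK hWne (fun _ => t) (fun σ => by rw [himg σ]; exact ht)
  simpa [Set.range_const] using h

/-- Proposition on the map `sdt` from (finitely) coherent SDSes to
coherent SDTs. -/
theorem cohSDS_to_cohSDT (T : Type u) [Nonempty T]
    (cl : Set T → Set T) (Tneg : Set T)
    (hcl : IsClosure cl) (hsan : cl (∅ : Set T) ∩ Tneg = ∅)
    (K : Set (Set T)) :
    ((CohSDS cl Tneg K ∨ FinCohSDS cl Tneg K) → sds (sdt K) ⊆ K) ∧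
    (CohSDS cl Tneg K → CohSDT cl Tneg (sdt K)) ∧
    (FinCohSDS cl Tneg K → IsFinitary cl → CohSDT cl Tneg (sdt K)) := by
  obtain ⟨hcl1, hcl2, hcl3⟩ := hcl
  refine ⟨?_, ?_, ?_⟩
  · -- part (a)
    rintro hK A ⟨t, htA, ht⟩
    have h2 : ∀ A₁ ∈ K, ∀ A₂ : Set T, A₁ ⊆ A₂ → A₂ ∈ K := by
      rcases hK with h | h
      · exact h.2.1
      · exact h.2.1
    exact h2 {t} ht A (by simpa using htA)
  · -- part (b)
    rintro ⟨h1, h2, h3, h4, h5⟩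
    constructor
    · apply Set.Subset.antisymm _ (hcl1 _)
      intro t ht
      rcases Set.eq_empty_or_nonempty (sdt K) with hD | hD
      · rw [hD] at ht
        exact h4 t ht
      · exact sdt_aux cl K (sdt K) subset_rfl hD t ht (h5 _)
    · by_contra h
      obtain ⟨t, ht, htn⟩ := Set.nonempty_iff_ne_empty.2 h
      have := h3 {t} ht
      rw [show ({t} : Set T) \ Tneg = ∅ from Set.diff_eq_empty.2 (Set.singleton_subset_iff.2 htn)] at this
      exact h1 this
  · -- part (c)
    rintro ⟨h1, h2, h3, h4, h5⟩ hfin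
    constructor
    · apply Set.Subset.antisymm _ (hcl1 _)
      intro t ht
      rw [hfin (sdt K)] at ht
      simp only [Set.mem_iUnion, Set.mem_setOf_eq] at ht
      obtain ⟨F, ⟨hFfin, hFsub⟩, htF⟩ := ht
      rcases Set.eq_empty_or_nonempty F with hF | hF
      · subst hF
        exact h4 t htF
      · exact sdt_aux cl K F hFsub hF t htF
          (fun hWK hWne => h5 _ hWK (hFfin.image _) hWne)
    · by_contra h
      obtain ⟨t, ht, htn⟩ := Set.nonempty_iff_ne_empty.2 h
      have := h3 {t} ht
      rw [show ({t} : Set T) \ Tneg = ∅ from Set.diff_eq_empty.2 (Set.singleton_subset_iff.2 htn)] at this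
      exact h1 this
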